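/- Let ρ be a partial factor set of G over κ such that ρ(g,g⁻¹) ∈ {0,1} for all g ∈ G. Then for all g, h ∈ G with ρ(g,h) ≠ 0, one has ρ(g,h) = ρ(h⁻¹,g⁻¹)⁻¹ and ρ(g,h) = ρ(h, h⁻¹g⁻¹). -/
import Mathlib


/-- A partial projective representation of a group `G` in a unital `κ`-algebra,
together with a factor set `σ` for it. -/
structure PartialProjectiveRep (κ : Type) (G : Type) [Field κ] [Group G] where
  carrier : Type
  [ringCarrier : Ring carrier]
  [algCarrier : Algebra κ carrier]
  Γ : G → carrier
  σ : G → G → κ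
  cond1 : ∀ g h : G, σ g h = 0 → Γ g⁻¹ * Γ (g * h) = 0 ∧ Γ (g * h) * Γ h⁻¹ = 0
  cond2 : ∀ g h : G, Γ g⁻¹ * Γ g * Γ h = σ g h • (Γ g⁻¹ * Γ (g * h))
  cond3 : ∀ g h : G, Γ g * Γ h * Γ h⁻¹ = σ g h • (Γ (g * h) * Γ h⁻¹)
  cond4 : Γ 1 = 1
  factor : ∀ g h : G, Γ g * Γ h = 0 → σ g h = 0

/-- `ρ ∈ pm(G)`: `ρ` is the factor set of some partial projective representation of `G`
in a `κ`-algebra. -/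
def IsPartialFactorSet (κ : Type) (G : Type) [Field κ] [Group G] (ρ : G → G → κ) : Prop :=
  ∃ P : PartialProjectiveRep κ G, P.σ = ρ

attribute [instance] PartialProjectiveRep.ringCarrier PartialProjectiveRep.algCarrier

namespace PartialProjectiveRep

variable {κ G : Type} [Field κ] [Group G] (P : PartialProjectiveRep κ G)

lemma smul_cancel {c : κ} {x : P.carrier} (hx : x ≠ 0) (h : x = c • x) : c = 1 := by
  have h0 : (1 - c) • x = 0 := by rw [sub_smul, one_smul, sub_eq_zero]; exact h
  rcases smul_eq_zero.mp h0 with h1 | h2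
  · exact (sub_eq_zero.mp h1).symm
  · exact absurd h2 hx

lemma sigma_self_ne (x : G) (hx : P.Γ x ≠ 0) : P.σ x x⁻¹ ≠ 0 := by
  intro h0
  have h := (P.cond1 x x⁻¹ h0).2
  rw [mul_inv_cancel, inv_inv, P.cond4, one_mul] at h
  exact hx h

lemma ida (x : G) (h1 : P.σ x x⁻¹ = 1) : P.Γ x * P.Γ x⁻¹ * P.Γ x = P.Γ x := by
  have h := P.cond3 x x⁻¹
  rw [inv_inv, mul_inv_cancel, P.cond4, one_mul, h1, one_smul] at h
  exact h

/-- The key expansion: if `σ a b ≠ 0` then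
`Γ a * Γ b = σ a b • (Γ a * (Γ a⁻¹ * Γ (a*b)))`, plus `σ a⁻¹ (a*b) = (σ a b)⁻¹`
and nonvanishing of `Γ a⁻¹ * Γ (a*b)`. -/
lemma lemA (a b : G) (h01 : ∀ g : G, P.σ g g⁻¹ = 0 ∨ P.σ g g⁻¹ = 1)
    (hab : P.σ a b ≠ 0) :
    P.σ a⁻¹ (a * b) = (P.σ a b)⁻¹ ∧ P.Γ a⁻¹ * P.Γ (a * b) ≠ 0 ∧
      P.Γ a * P.Γ b = P.σ a b • (P.Γ a * (P.Γ a⁻¹ * P.Γ (a * b))) := by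
  have hprod : P.Γ a * P.Γ b ≠ 0 := fun z => hab (P.factor a b z)
  have hΓa : P.Γ a ≠ 0 := fun z => hprod (by rw [z, zero_mul])
  have haa : P.σ a a⁻¹ = 1 := (h01 a).resolve_left (P.sigma_self_ne a hΓa)
  have hida := P.ida a haa
  have key1 : P.Γ a * P.Γ b = P.σ a b • (P.Γ a * (P.Γ a⁻¹ * P.Γ (a * b))) := by
    calc P.Γ a * P.Γ b = (P.Γ a * P.Γ a⁻¹ * P.Γ a) * P.Γ b := by rw [hida]
      _ = P.Γ a * (P.Γ a⁻¹ * P.Γ a * P.Γ b) := by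
            rw [mul_assoc, mul_assoc, mul_assoc]
      _ = P.Γ a * (P.σ a b • (P.Γ a⁻¹ * P.Γ (a * b))) := by rw [P.cond2]
      _ = P.σ a b • (P.Γ a * (P.Γ a⁻¹ * P.Γ (a * b))) := by rw [mul_smul_comm]
  have hne1 : P.Γ a * (P.Γ a⁻¹ * P.Γ (a * b)) ≠ 0 := by
    intro z
    exact hprod (by rw [key1, z, smul_zero])
  have hne2 : P.Γ a⁻¹ * P.Γ (a * b) ≠ 0 := fun z => hne1 (by rw [z, mul_zero])
  have key2 := P.cond2 a⁻¹ (a * b)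
  rw [inv_inv, inv_mul_cancel_left, mul_assoc] at key2
  -- key2 : Γ a * (Γ a⁻¹ * Γ (a*b)) = σ a⁻¹ (a*b) • (Γ a * Γ b)
  have key3 : P.Γ a * P.Γ b = (P.σ a b * P.σ a⁻¹ (a * b)) • (P.Γ a * P.Γ b) := by
    rw [mul_smul, ← key2]; exact key1
  have hone : P.σ a b * P.σ a⁻¹ (a * b) = 1 := P.smul_cancel hprod key3
  exact ⟨(inv_eq_of_mul_eq_one_right hone).symm, hne2, key1⟩

lemma lemB (a b : G) (h01 : ∀ g : G, P.σ g g⁻¹ = 0 ∨ P.σ g g⁻¹ = 1)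
    (hab : P.σ a b ≠ 0) :
    P.σ (a * b) b⁻¹ = (P.σ a b)⁻¹ := by
  have hprod : P.Γ a * P.Γ b ≠ 0 := fun z => hab (P.factor a b z)
  have hΓb : P.Γ b ≠ 0 := fun z => hprod (by rw [z, mul_zero])
  have hbb : P.σ b b⁻¹ = 1 := (h01 b).resolve_left (P.sigma_self_ne b hΓb)
  have hidb := P.ida b hbb
  have key1 : P.Γ a * P.Γ b = P.σ a b • (P.Γ (a * b) * P.Γ b⁻¹ * P.Γ b) := by
    calc P.Γ a * P.Γ b = P.Γ a * (P.Γ b * P.Γ b⁻¹ * P.Γ b) := by rw [hidb]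
      _ = (P.Γ a * P.Γ b * P.Γ b⁻¹) * P.Γ b := by
            rw [mul_assoc, mul_assoc, mul_assoc]
      _ = (P.σ a b • (P.Γ (a * b) * P.Γ b⁻¹)) * P.Γ b := by rw [P.cond3]
      _ = P.σ a b • (P.Γ (a * b) * P.Γ b⁻¹ * P.Γ b) := by rw [smul_mul_assoc]
  have key2 := P.cond3 (a * b) b⁻¹
  rw [inv_inv, mul_inv_cancel_right] at key2
  -- key2 : Γ (a*b) * Γ b⁻¹ * Γ b = σ (a*b) b⁻¹ • (Γ a * Γ b)
  have key3 : P.Γ a * P.Γ b = (P.σ a b * P.σ (a * b) b⁻¹) • (P.Γ a * P.Γ b) := by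
    rw [mul_smul, ← key2]; exact key1
  have hone : P.σ a b * P.σ (a * b) b⁻¹ = 1 := P.smul_cancel hprod key3
  exact (inv_eq_of_mul_eq_one_right hone).symm

end PartialProjectiveRep

/-- Let `ρ` be a partial factor set of `G` over `κ` such that
`ρ(g,g⁻¹) ∈ {0,1}` for all `g ∈ G`.  Then for all `g, h` with `ρ(g,h) ≠ 0` one has
`ρ(g,h) = ρ(h⁻¹,g⁻¹)⁻¹` and `ρ(g,h) = ρ(h, h⁻¹g⁻¹)`. -/
theorem partialFactorSet_good_identities
    {κ G : Type} [Field κ] [Group G] (ρ : G → G → κ)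
    (hpm : IsPartialFactorSet κ G ρ)
    (h01 : ∀ g : G, ρ g g⁻¹ = 0 ∨ ρ g g⁻¹ = 1) :
    ∀ g h : G, ρ g h ≠ 0 →
      ρ g h = (ρ h⁻¹ g⁻¹)⁻¹ ∧ ρ g h = ρ h (h⁻¹ * g⁻¹) := by
  obtain ⟨P, rfl⟩ := hpm
  intro g h hgh
  have hprod : P.Γ g * P.Γ h ≠ 0 := fun z => hgh (P.factor g h z)
  obtain ⟨hA, hneA, keyA⟩ := P.lemA g h h01 hgh
  -- hA : σ g⁻¹ (g*h) = (σ g h)⁻¹,  hneA : Γ g⁻¹ * Γ (g*h) ≠ 0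
  have hΓgh : P.Γ (g * h) ≠ 0 := fun z => hneA (by rw [z, mul_zero])
  have hgh1 : P.σ (g * h) (g * h)⁻¹ = 1 :=
    (h01 (g * h)).resolve_left (P.sigma_self_ne (g * h) hΓgh)
  have idgh := P.ida (g * h) hgh1
  -- hKey : Γ g * Γ h = Γ g * (Γ h * Γ (g*h)⁻¹ * Γ (g*h))
  have hc3' := P.cond3 g⁻¹ (g * h)
  rw [inv_mul_cancel_left, hA] at hc3'
  -- hc3' : Γ g⁻¹ * Γ (g*h) * Γ (g*h)⁻¹ = (σ g h)⁻¹ • (Γ h * Γ (g*h)⁻¹)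
  have hKey : P.Γ g * P.Γ h = P.Γ g * (P.Γ h * P.Γ (g * h)⁻¹ * P.Γ (g * h)) := by
    calc P.Γ g * P.Γ h
        = P.σ g h • (P.Γ g * (P.Γ g⁻¹ * P.Γ (g * h))) := keyA
      _ = P.σ g h • (P.Γ g * (P.Γ g⁻¹ * (P.Γ (g * h) * P.Γ (g * h)⁻¹ * P.Γ (g * h)))) := by
            rw [idgh]
      _ = P.σ g h • (P.Γ g * ((P.Γ g⁻¹ * P.Γ (g * h) * P.Γ (g * h)⁻¹) * P.Γ (g * h))) := by
            rw [mul_assoc (P.Γ g⁻¹), mul_assoc (P.Γ g⁻¹)]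
      _ = P.σ g h • (P.Γ g * (((P.σ g h)⁻¹ • (P.Γ h * P.Γ (g * h)⁻¹)) * P.Γ (g * h))) := by
            rw [hc3']
      _ = (P.σ g h * (P.σ g h)⁻¹) • (P.Γ g * (P.Γ h * P.Γ (g * h)⁻¹ * P.Γ (g * h))) := by
            rw [smul_mul_assoc, mul_smul_comm, smul_smul]
      _ = P.Γ g * (P.Γ h * P.Γ (g * h)⁻¹ * P.Γ (g * h)) := by
            rw [mul_inv_cancel₀ hgh, one_smul]
  have hν1 : P.Γ h * P.Γ (g * h)⁻¹ ≠ 0 := by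
    intro z
    exact hprod (by rw [hKey, z, zero_mul, mul_zero])
  -- μ = σ h⁻¹ g⁻¹ ≠ 0
  have hμ : P.σ h⁻¹ g⁻¹ ≠ 0 := by
    intro h0
    have := (P.cond1 h⁻¹ g⁻¹ h0).1
    rw [inv_inv] at this
    exact hν1 (by rw [mul_inv_rev]; exact this)
  -- ν = σ h (h⁻¹ * g⁻¹) ≠ 0
  have hν : P.σ h (h⁻¹ * g⁻¹) ≠ 0 := by
    intro h0
    have := (P.cond1 h (h⁻¹ * g⁻¹) h0).2
    rw [mul_inv_cancel_left, mul_inv_rev, inv_inv, inv_inv] at this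
    exact hneA this
  -- from lemA on (h⁻¹, g⁻¹): σ h (h⁻¹*g⁻¹) = (σ h⁻¹ g⁻¹)⁻¹
  have hμν := (P.lemA h⁻¹ g⁻¹ h01 hμ).1
  rw [inv_inv] at hμν
  -- from lemB on (h, h⁻¹*g⁻¹): σ g⁻¹ (g*h) = (σ h (h⁻¹*g⁻¹))⁻¹
  have hB := P.lemB h (h⁻¹ * g⁻¹) h01 hν
  rw [mul_inv_cancel_left, mul_inv_rev, inv_inv, inv_inv] at hB
  -- hB : σ g⁻¹ (g*h) = (σ h (h⁻¹*g⁻¹))⁻¹, combined with hA: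
  have hlam : P.σ g h = P.σ h (h⁻¹ * g⁻¹) := by
    have : (P.σ g h)⁻¹ = (P.σ h (h⁻¹ * g⁻¹))⁻¹ := by rw [← hA, hB]
    exact inv_injective this
  refine ⟨?_, hlam⟩
  rw [hlam, hμν]
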